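/- Let t ≥ 1 and μ ≥ 1. Let N₁, N₂, N₃ be real symmetric positive definite t×t matrices and B₁, O₁, O₂ real symmetric positive semidefinite t×t matrices with B₁·O₁ = 0, and suppose the KKT stationarity condition (B₁+N₁)⁻¹ + (μ−1)(B₁+N₃)⁻¹ + O₁ = μ(B₁+N₂)⁻¹ + O₂ holds. Define N₁' = (N₁⁻¹ + O₁)⁻¹ and N₂' = ((B₁+N₂)⁻¹ + (1/μ)O₂)⁻¹ − B₁. Then B₁ + N₁' and B₁ + N₂' are invertible and (B₁+N₁')⁻¹ + (μ−1)(B₁+N₃)⁻¹ = μ(B₁+N₂')⁻¹. -/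

import Mathlib

open Matrix

lemma psd_smul_aux {t : ℕ} {c : ℝ} (hc : 0 ≤ c) {M : Matrix (Fin t) (Fin t) ℝ}
    (hM : M.PosSemidef) : (c • M).PosSemidef := by
  refine ⟨?_, fun x => ?_⟩
  · unfold Matrix.IsHermitian
    rw [conjTranspose_smul, hM.1]
    simp
  · exact ((hM.smul hc).2 x)

/-- Transfer of the KKT stationarity condition to the enhanced channel:
with `N₁' = (N₁⁻¹ + O₁)⁻¹` and `N₂' = ((B₁+N₂)⁻¹ + (1/μ)O₂)⁻¹ - B₁`, the
original KKT condition implies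
`(B₁+N₁')⁻¹ + (μ-1)(B₁+N₃)⁻¹ = μ(B₁+N₂')⁻¹`. -/
theorem stmt_12 (t : ℕ) (ht : 1 ≤ t) (μ : ℝ) (hμ : 1 ≤ μ)
    (N₁ N₂ N₃ B₁ O₁ O₂ : Matrix (Fin t) (Fin t) ℝ)
    (hN₁ : N₁.PosDef) (hN₂ : N₂.PosDef) (hN₃ : N₃.PosDef)
    (hB₁ : B₁.PosSemidef) (hO₁ : O₁.PosSemidef) (hO₂ : O₂.PosSemidef)
    (hBO₁ : B₁ * O₁ = 0)
    (hKKT : (B₁ + N₁)⁻¹ + (μ - 1) • (B₁ + N₃)⁻¹ + O₁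
              = μ • (B₁ + N₂)⁻¹ + O₂)
    (N₁' N₂' : Matrix (Fin t) (Fin t) ℝ)
    (hN₁' : N₁' = (N₁⁻¹ + O₁)⁻¹)
    (hN₂' : N₂' = ((B₁ + N₂)⁻¹ + (1 / μ) • O₂)⁻¹ - B₁) :
    IsUnit (B₁ + N₁') ∧ IsUnit (B₁ + N₂') ∧
      (B₁ + N₁')⁻¹ + (μ - 1) • (B₁ + N₃)⁻¹ = μ • (B₁ + N₂')⁻¹ := by
  have hμ0 : (0:ℝ) < μ := lt_of_lt_of_le one_pos hμ
  -- O₁ B₁ = 0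
  have hO₁B : O₁ * B₁ = 0 := by
    have := congrArg Matrix.transpose hBO₁
    rw [Matrix.transpose_mul, Matrix.transpose_zero] at this
    have h1 : O₁.transpose = O₁ := by
      have := hO₁.1; rwa [Matrix.IsHermitian, conjTranspose_eq_transpose_of_trivial] at this
    have h2 : B₁.transpose = B₁ := by
      have := hB₁.1; rwa [Matrix.IsHermitian, conjTranspose_eq_transpose_of_trivial] at this
    rwa [h1, h2] at this
  -- positive definiteness facts
  set S := N₁⁻¹ + O₁ with hS
  have hSpd : S.PosDef := hN₁.inv.add_posSemidef hO₁
  have hN₁inv_det : IsUnit N₁.det := hN₁.isUnit.map detMonoidHom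
  have hSdet : IsUnit S.det := hSpd.isUnit.map detMonoidHom
  have hBN₁pd : (B₁ + N₁).PosDef := Matrix.PosDef.posSemidef_add hB₁ hN₁
  have hBN₁det : IsUnit (B₁ + N₁).det := hBN₁pd.isUnit.map detMonoidHom
  have hBN₂pd : (B₁ + N₂).PosDef := Matrix.PosDef.posSemidef_add hB₁ hN₂
  set T := (B₁ + N₂)⁻¹ + (1 / μ) • O₂ with hT
  have hTpd : T.PosDef := hBN₂pd.inv.add_posSemidef (psd_smul_aux (by positivity) hO₂)
  have hTdet : IsUnit T.det := hTpd.isUnit.map detMonoidHom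
  -- B₁ + N₁' is PD
  have hBN₁' : B₁ + N₁' = B₁ + S⁻¹ := by rw [hN₁']
  have hBN₁'pd : (B₁ + N₁').PosDef := by rw [hBN₁']; exact Matrix.PosDef.posSemidef_add hB₁ hSpd.inv
  -- B₁ + N₂' = T⁻¹
  have hBN₂' : B₁ + N₂' = T⁻¹ := by rw [hN₂', add_sub_cancel]
  have hBN₂'pd : (B₁ + N₂').PosDef := by rw [hBN₂']; exact hTpd.inv
  refine ⟨hBN₁'pd.isUnit, hBN₂'pd.isUnit, ?_⟩
  -- key identity: (B₁ + S⁻¹) * ((B₁+N₁)⁻¹ + O₁) = 1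
  have hkey : S⁻¹ * N₁⁻¹ * B₁ = B₁ := by
    have h1 : N₁⁻¹ * B₁ = S * B₁ := by rw [hS, add_mul, hO₁B, add_zero]
    rw [mul_assoc, h1, ← mul_assoc, Matrix.nonsing_inv_mul S hSdet, one_mul]
  have hmain : (B₁ + S⁻¹) * ((B₁ + N₁)⁻¹ + O₁) = 1 := by
    have h2 : (B₁ + S⁻¹) * (B₁ + N₁)⁻¹ = S⁻¹ * N₁⁻¹ := by
      have h3 : (B₁ + S⁻¹) = S⁻¹ * N₁⁻¹ * (B₁ + N₁) := by
        rw [mul_add, hkey, mul_assoc, Matrix.nonsing_inv_mul N₁ hN₁inv_det, mul_one]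
      rw [h3, mul_assoc, Matrix.mul_nonsing_inv _ hBN₁det, mul_one]
    have h4 : S⁻¹ * O₁ = 1 - S⁻¹ * N₁⁻¹ := by
      have : O₁ = S - N₁⁻¹ := by rw [hS]; abel
      rw [this, mul_sub, Matrix.nonsing_inv_mul S hSdet]
    rw [mul_add, h2, add_mul, hBO₁, zero_add, h4]
    abel
  have hinv₁ : (B₁ + N₁')⁻¹ = (B₁ + N₁)⁻¹ + O₁ := by
    rw [hBN₁']; exact Matrix.inv_eq_right_inv hmain
  have hinv₂ : (B₁ + N₂')⁻¹ = T := by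
    rw [hBN₂', Matrix.nonsing_inv_nonsing_inv T hTdet]
  rw [hinv₁, hinv₂, hT, smul_add, smul_smul, mul_one_div, div_self hμ0.ne', one_smul]
  rw [add_right_comm]
  exact hKKT
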